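/- arXiv:2001.02373 — 2 statements merged into one kernel-verified Lean document; each statement's English description precedes it below -/
import Mathlib

section
/- Let $T^3$ be a product of three finite trees with tri-parameter Hardy operator $\mathbf{I}$. Let $0 < \delta \leq \lambda/4$ and let $f : T^3 \to [0,\infty)$ be supported on $\{\mathbf{I} f \leq \delta\}$. Then pointwise $(\mathbf{I} f)\, \mathbf{1}_{\{\lambda \leq \mathbf{I} f \leq 2\lambda\}} \leq 4\lambda^{-1}\, \mathbf{I}\Big( \sum_{i \in \{1,2,3\}} I_i f \cdot I_{(i)} f \cdot \mathbf{1}_{\{\mathbf{I} f \leq 2\lambda\}} \Big)$, where $I_{(i)} = \prod_{j \neq i} I_j$. -/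
open Finset
open scoped Classical

/-- A tree order: the set of elements above any given element is totally ordered. -/
def IsTreeOrder (T : Type*) [PartialOrder T] : Prop :=
  ∀ ω a b : T, ω ≤ a → ω ≤ b → a ≤ b ∨ b ≤ a

/-- The Hardy operator `I f α = ∑_{α' ≥ α} f α'`. -/
noncomputable def hI {T : Type*} [Fintype T] [PartialOrder T] (f : T → ℝ) (a : T) : ℝ :=
  ∑ b, if a ≤ b then f b else 0

/-- The adjoint Hardy operator `I* f β = ∑_{α ≤ β} f α`. -/
noncomputable def hIstar {T : Type*} [Fintype T] [PartialOrder T] (f : T → ℝ) (b : T) : ℝ :=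
  ∑ a, if a ≤ b then f a else 0

/-- `b` is a child of `β`: a maximal element of the set of elements strictly below `β`. -/
def IsChild {T : Type*} [PartialOrder T] (b β : T) : Prop :=
  b < β ∧ ∀ c, b < c → c < β → False

/-- The difference operator `Δ f β = f β - ∑_{β' ∈ ch β} f β'`. -/
noncomputable def hDelta {T : Type*} [Fintype T] [PartialOrder T] (f : T → ℝ) (β : T) : ℝ :=
  f β - ∑ b, if IsChild b β then f b else 0

/-- A superadditive function on a tree: `f β ≥ ∑_{β' ∈ ch β} f β'` for all `β`. -/
def Superadd {T : Type*} [Fintype T] [PartialOrder T] (f : T → ℝ) : Prop :=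
  ∀ β : T, (∑ b, if IsChild b β then f b else 0) ≤ f β

/-- The Hardy operator acting in the first coordinate of a tri-tree. -/
noncomputable def k1 {T1 T2 T3 : Type*} [Fintype T1] [PartialOrder T1]
    (f : T1 × T2 × T3 → ℝ) (a : T1 × T2 × T3) : ℝ :=
  ∑ b : T1, if a.1 ≤ b then f (b, a.2.1, a.2.2) else 0

/-- The Hardy operator acting in the second coordinate of a tri-tree. -/
noncomputable def k2 {T1 T2 T3 : Type*} [Fintype T2] [PartialOrder T2]
    (f : T1 × T2 × T3 → ℝ) (a : T1 × T2 × T3) : ℝ :=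
  ∑ b : T2, if a.2.1 ≤ b then f (a.1, b, a.2.2) else 0

/-- The Hardy operator acting in the third coordinate of a tri-tree. -/
noncomputable def k3 {T1 T2 T3 : Type*} [Fintype T3] [PartialOrder T3]
    (f : T1 × T2 × T3 → ℝ) (a : T1 × T2 × T3) : ℝ :=
  ∑ b : T3, if a.2.2 ≤ b then f (a.1, a.2.1, b) else 0

/-- Superadditivity in the first parameter separately. -/
def SuperaddT1 {T1 T2 T3 : Type*} [Fintype T1] [PartialOrder T1]
    (f : T1 × T2 × T3 → ℝ) : Prop :=
  ∀ (β : T1) (a2 : T2) (a3 : T3),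
    (∑ b, if IsChild b β then f (b, a2, a3) else 0) ≤ f (β, a2, a3)

/-- Superadditivity in the second parameter separately. -/
def SuperaddT2 {T1 T2 T3 : Type*} [Fintype T2] [PartialOrder T2]
    (f : T1 × T2 × T3 → ℝ) : Prop :=
  ∀ (a1 : T1) (β : T2) (a3 : T3),
    (∑ b, if IsChild b β then f (a1, b, a3) else 0) ≤ f (a1, β, a3)

/-- Superadditivity in the third parameter separately. -/
def SuperaddT3 {T1 T2 T3 : Type*} [Fintype T3] [PartialOrder T3]
    (f : T1 × T2 × T3 → ℝ) : Prop :=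
  ∀ (a1 : T1) (a2 : T2) (β : T3),
    (∑ b, if IsChild b β then f (a1, a2, b) else 0) ≤ f (a1, a2, β)

section StmtSevenAux

set_option linter.unusedSectionVars false

variable {T1 T2 T3 : Type*} [Fintype T1] [PartialOrder T1] [Fintype T2] [PartialOrder T2]
    [Fintype T3] [PartialOrder T3]

lemma stmt7_hI_nonneg {T : Type*} [Fintype T] [PartialOrder T] (f : T → ℝ) (hf : ∀ a, 0 ≤ f a)
    (a : T) : 0 ≤ hI f a :=
  Finset.sum_nonneg fun b _ => by split_ifs; exacts [hf b, le_refl 0]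

lemma stmt7_hI_anti {T : Type*} [Fintype T] [PartialOrder T] (f : T → ℝ) (hf : ∀ a, 0 ≤ f a)
    {a b : T} (hab : a ≤ b) : hI f b ≤ hI f a := by
  apply Finset.sum_le_sum
  intro c _
  split_ifs with h h'
  · exact le_refl _
  · exact absurd (le_trans hab h) h'
  · exact hf c
  · exact le_refl _

lemma stmt7_k1_nonneg (f : T1 × T2 × T3 → ℝ) (hf : ∀ a, 0 ≤ f a) (a : T1 × T2 × T3) :
    0 ≤ k1 f a :=
  Finset.sum_nonneg fun b _ => by split_ifs; exacts [hf _, le_refl 0]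

lemma stmt7_k2_nonneg (f : T1 × T2 × T3 → ℝ) (hf : ∀ a, 0 ≤ f a) (a : T1 × T2 × T3) :
    0 ≤ k2 f a :=
  Finset.sum_nonneg fun b _ => by split_ifs; exacts [hf _, le_refl 0]

lemma stmt7_k3_nonneg (f : T1 × T2 × T3 → ℝ) (hf : ∀ a, 0 ≤ f a) (a : T1 × T2 × T3) :
    0 ≤ k3 f a :=
  Finset.sum_nonneg fun b _ => by split_ifs; exacts [hf _, le_refl 0]

lemma stmt7_k2k3_eq (f : T1 × T2 × T3 → ℝ) (c : T1 × T2 × T3) :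
    k2 (k3 f) c = ∑ v : T2 × T3, if c.2 ≤ v then f (c.1, v.1, v.2) else 0 := by
  rw [Fintype.sum_prod_type]
  simp only [k2, k3, Prod.mk_le_mk, Prod.le_def]
  apply Finset.sum_congr rfl
  intro y _
  by_cases h : c.2.1 ≤ y <;> simp [h]

lemma stmt7_k1k3_eq (f : T1 × T2 × T3 → ℝ) (c : T1 × T2 × T3) :
    k1 (k3 f) c = ∑ v : T1 × T3, if (c.1, c.2.2) ≤ v then f (v.1, c.2.1, v.2) else 0 := by
  rw [Fintype.sum_prod_type]
  simp only [k1, k3, Prod.mk_le_mk, Prod.le_def]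
  apply Finset.sum_congr rfl
  intro y _
  by_cases h : c.1 ≤ y <;> simp [h]

lemma stmt7_k1k2_eq (f : T1 × T2 × T3 → ℝ) (c : T1 × T2 × T3) :
    k1 (k2 f) c = ∑ v : T1 × T2, if (c.1, c.2.1) ≤ v then f (v.1, v.2, c.2.2) else 0 := by
  rw [Fintype.sum_prod_type]
  simp only [k1, k2, Prod.mk_le_mk, Prod.le_def]
  apply Finset.sum_congr rfl
  intro y _
  by_cases h : c.1 ≤ y <;> simp [h]

lemma stmt7_mixed1 (f : T1 × T2 × T3 → ℝ) (α : T1 × T2 × T3) :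
    ∑ a : T1 × T2 × T3, ∑ b : T1 × T2 × T3,
      (if α ≤ a ∧ α ≤ b ∧ b.1 ≤ a.1 ∧ a.2.1 ≤ b.2.1 ∧ a.2.2 ≤ b.2.2 then f a * f b else 0)
    = ∑ c : T1 × T2 × T3, (if α ≤ c then k1 f c * k2 (k3 f) c else 0) := by
  have step : ∀ c : T1 × T2 × T3, (if α ≤ c then k1 f c * k2 (k3 f) c else 0)
      = ∑ u : T1, ∑ v : T2 × T3,
          (if α ≤ c ∧ c.1 ≤ u ∧ c.2 ≤ v then f (u, c.2.1, c.2.2) * f (c.1, v.1, v.2) else 0) := by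
    intro c
    by_cases h : α ≤ c
    · rw [if_pos h, stmt7_k2k3_eq, k1, Finset.sum_mul_sum]
      refine Finset.sum_congr rfl fun u _ => Finset.sum_congr rfl fun v _ => ?_
      by_cases hP : c.1 ≤ u <;> by_cases hQ : c.2 ≤ v <;> simp [hP, hQ, h]
    · rw [if_neg h]
      symm
      exact Finset.sum_eq_zero fun u _ => Finset.sum_eq_zero fun v _ => by simp [h]
  rw [Finset.sum_congr rfl fun c _ => step c]
  have key : (∑ p : (T1 × T2 × T3) × (T1 × T2 × T3),
        (if α ≤ p.1 ∧ α ≤ p.2 ∧ p.2.1 ≤ p.1.1 ∧ p.1.2.1 ≤ p.2.2.1 ∧ p.1.2.2 ≤ p.2.2.2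
          then f p.1 * f p.2 else 0))
      = ∑ q : (T1 × T2 × T3) × (T1 × (T2 × T3)),
        (if α ≤ q.1 ∧ q.1.1 ≤ q.2.1 ∧ q.1.2 ≤ q.2.2
          then f (q.2.1, q.1.2.1, q.1.2.2) * f (q.1.1, q.2.2.1, q.2.2.2) else 0) := by
    apply Fintype.sum_equiv
      (⟨fun p => ((p.2.1, p.1.2), p.1.1, p.2.2), fun q => ((q.2.1, q.1.2), (q.1.1, q.2.2)),
        fun _ => rfl, fun _ => rfl⟩ :
        ((T1 × T2 × T3) × (T1 × T2 × T3)) ≃ ((T1 × T2 × T3) × (T1 × (T2 × T3))))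
    intro p
    obtain ⟨a, b⟩ := p
    dsimp only [Equiv.coe_fn_mk]
    refine if_congr ?_ rfl rfl
    simp only [Prod.le_def]
    constructor
    · rintro ⟨⟨ha1, ha2, ha3⟩, ⟨hb1, hb2, hb3⟩, h1, h2, h3⟩
      exact ⟨⟨hb1, ha2, ha3⟩, h1, h2, h3⟩
    · rintro ⟨⟨hb1, ha2, ha3⟩, h1, h2, h3⟩
      exact ⟨⟨le_trans hb1 h1, ha2, ha3⟩, ⟨hb1, le_trans ha2 h2, le_trans ha3 h3⟩, h1, h2, h3⟩
  calc ∑ a : T1 × T2 × T3, ∑ b : T1 × T2 × T3,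
        (if α ≤ a ∧ α ≤ b ∧ b.1 ≤ a.1 ∧ a.2.1 ≤ b.2.1 ∧ a.2.2 ≤ b.2.2 then f a * f b else 0)
      = ∑ p : (T1 × T2 × T3) × (T1 × T2 × T3),
        (if α ≤ p.1 ∧ α ≤ p.2 ∧ p.2.1 ≤ p.1.1 ∧ p.1.2.1 ≤ p.2.2.1 ∧ p.1.2.2 ≤ p.2.2.2
          then f p.1 * f p.2 else 0) :=
        (Fintype.sum_prod_type' fun a b =>
          if α ≤ a ∧ α ≤ b ∧ b.1 ≤ a.1 ∧ a.2.1 ≤ b.2.1 ∧ a.2.2 ≤ b.2.2 then f a * f b else 0).symm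
    _ = ∑ q : (T1 × T2 × T3) × (T1 × (T2 × T3)),
        (if α ≤ q.1 ∧ q.1.1 ≤ q.2.1 ∧ q.1.2 ≤ q.2.2
          then f (q.2.1, q.1.2.1, q.1.2.2) * f (q.1.1, q.2.2.1, q.2.2.2) else 0) := key
    _ = ∑ c : T1 × T2 × T3, ∑ u : T1, ∑ v : T2 × T3,
        (if α ≤ c ∧ c.1 ≤ u ∧ c.2 ≤ v then f (u, c.2.1, c.2.2) * f (c.1, v.1, v.2) else 0) := by
        rw [show (∑ q : (T1 × T2 × T3) × (T1 × (T2 × T3)),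
            (if α ≤ q.1 ∧ q.1.1 ≤ q.2.1 ∧ q.1.2 ≤ q.2.2
              then f (q.2.1, q.1.2.1, q.1.2.2) * f (q.1.1, q.2.2.1, q.2.2.2) else 0))
          = ∑ c : T1 × T2 × T3, ∑ w : T1 × (T2 × T3),
            (if α ≤ c ∧ c.1 ≤ w.1 ∧ c.2 ≤ w.2
              then f (w.1, c.2.1, c.2.2) * f (c.1, w.2.1, w.2.2) else 0) from
          Fintype.sum_prod_type' fun (c : T1 × T2 × T3) (w : T1 × (T2 × T3)) =>
            if α ≤ c ∧ c.1 ≤ w.1 ∧ c.2 ≤ w.2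
              then f (w.1, c.2.1, c.2.2) * f (c.1, w.2.1, w.2.2) else 0]
        exact Finset.sum_congr rfl fun c _ =>
          Fintype.sum_prod_type' fun u v =>
            if α ≤ c ∧ c.1 ≤ u ∧ c.2 ≤ v then f (u, c.2.1, c.2.2) * f (c.1, v.1, v.2) else 0

lemma stmt7_mixed2 (f : T1 × T2 × T3 → ℝ) (α : T1 × T2 × T3) :
    ∑ a : T1 × T2 × T3, ∑ b : T1 × T2 × T3,
      (if α ≤ a ∧ α ≤ b ∧ a.1 ≤ b.1 ∧ b.2.1 ≤ a.2.1 ∧ a.2.2 ≤ b.2.2 then f a * f b else 0)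
    = ∑ c : T1 × T2 × T3, (if α ≤ c then k2 f c * k1 (k3 f) c else 0) := by
  have step : ∀ c : T1 × T2 × T3, (if α ≤ c then k2 f c * k1 (k3 f) c else 0)
      = ∑ u : T2, ∑ v : T1 × T3,
          (if α ≤ c ∧ c.2.1 ≤ u ∧ (c.1, c.2.2) ≤ v
            then f (c.1, u, c.2.2) * f (v.1, c.2.1, v.2) else 0) := by
    intro c
    by_cases h : α ≤ c
    · rw [if_pos h, stmt7_k1k3_eq, k2, Finset.sum_mul_sum]
      refine Finset.sum_congr rfl fun u _ => Finset.sum_congr rfl fun v _ => ?_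
      by_cases hP : c.2.1 ≤ u <;> by_cases hQ : (c.1, c.2.2) ≤ v <;> simp [hP, hQ, h]
    · rw [if_neg h]
      symm
      exact Finset.sum_eq_zero fun u _ => Finset.sum_eq_zero fun v _ => by simp [h]
  rw [Finset.sum_congr rfl fun c _ => step c]
  have key : (∑ p : (T1 × T2 × T3) × (T1 × T2 × T3),
        (if α ≤ p.1 ∧ α ≤ p.2 ∧ p.1.1 ≤ p.2.1 ∧ p.2.2.1 ≤ p.1.2.1 ∧ p.1.2.2 ≤ p.2.2.2
          then f p.1 * f p.2 else 0))
      = ∑ q : (T1 × T2 × T3) × (T2 × (T1 × T3)),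
        (if α ≤ q.1 ∧ q.1.2.1 ≤ q.2.1 ∧ (q.1.1, q.1.2.2) ≤ q.2.2
          then f (q.1.1, q.2.1, q.1.2.2) * f (q.2.2.1, q.1.2.1, q.2.2.2) else 0) := by
    apply Fintype.sum_equiv
      (⟨fun p => ((p.1.1, p.2.2.1, p.1.2.2), p.1.2.1, (p.2.1, p.2.2.2)),
        fun q => ((q.1.1, q.2.1, q.1.2.2), (q.2.2.1, q.1.2.1, q.2.2.2)),
        fun _ => rfl, fun _ => rfl⟩ :
        ((T1 × T2 × T3) × (T1 × T2 × T3)) ≃ ((T1 × T2 × T3) × (T2 × (T1 × T3))))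
    intro p
    obtain ⟨a, b⟩ := p
    dsimp only [Equiv.coe_fn_mk]
    refine if_congr ?_ rfl rfl
    simp only [Prod.le_def]
    constructor
    · rintro ⟨⟨ha1, ha2, ha3⟩, ⟨hb1, hb2, hb3⟩, hc1, hc2, hc3⟩
      exact ⟨⟨ha1, hb2, ha3⟩, hc2, hc1, hc3⟩
    · rintro ⟨⟨ha1, hb2, ha3⟩, hc2, hc1, hc3⟩
      exact ⟨⟨ha1, le_trans hb2 hc2, ha3⟩, ⟨le_trans ha1 hc1, hb2, le_trans ha3 hc3⟩,
        hc1, hc2, hc3⟩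
  calc ∑ a : T1 × T2 × T3, ∑ b : T1 × T2 × T3,
        (if α ≤ a ∧ α ≤ b ∧ a.1 ≤ b.1 ∧ b.2.1 ≤ a.2.1 ∧ a.2.2 ≤ b.2.2 then f a * f b else 0)
      = ∑ p : (T1 × T2 × T3) × (T1 × T2 × T3),
        (if α ≤ p.1 ∧ α ≤ p.2 ∧ p.1.1 ≤ p.2.1 ∧ p.2.2.1 ≤ p.1.2.1 ∧ p.1.2.2 ≤ p.2.2.2
          then f p.1 * f p.2 else 0) :=
        (Fintype.sum_prod_type' fun a b =>
          if α ≤ a ∧ α ≤ b ∧ a.1 ≤ b.1 ∧ b.2.1 ≤ a.2.1 ∧ a.2.2 ≤ b.2.2 then f a * f b else 0).symm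
    _ = ∑ q : (T1 × T2 × T3) × (T2 × (T1 × T3)),
        (if α ≤ q.1 ∧ q.1.2.1 ≤ q.2.1 ∧ (q.1.1, q.1.2.2) ≤ q.2.2
          then f (q.1.1, q.2.1, q.1.2.2) * f (q.2.2.1, q.1.2.1, q.2.2.2) else 0) := key
    _ = ∑ c : T1 × T2 × T3, ∑ u : T2, ∑ v : T1 × T3,
        (if α ≤ c ∧ c.2.1 ≤ u ∧ (c.1, c.2.2) ≤ v
          then f (c.1, u, c.2.2) * f (v.1, c.2.1, v.2) else 0) := by
        rw [show (∑ q : (T1 × T2 × T3) × (T2 × (T1 × T3)),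
            (if α ≤ q.1 ∧ q.1.2.1 ≤ q.2.1 ∧ (q.1.1, q.1.2.2) ≤ q.2.2
              then f (q.1.1, q.2.1, q.1.2.2) * f (q.2.2.1, q.1.2.1, q.2.2.2) else 0))
          = ∑ c : T1 × T2 × T3, ∑ w : T2 × (T1 × T3),
            (if α ≤ c ∧ c.2.1 ≤ w.1 ∧ (c.1, c.2.2) ≤ w.2
              then f (c.1, w.1, c.2.2) * f (w.2.1, c.2.1, w.2.2) else 0) from
          Fintype.sum_prod_type' fun (c : T1 × T2 × T3) (w : T2 × (T1 × T3)) =>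
            if α ≤ c ∧ c.2.1 ≤ w.1 ∧ (c.1, c.2.2) ≤ w.2
              then f (c.1, w.1, c.2.2) * f (w.2.1, c.2.1, w.2.2) else 0]
        exact Finset.sum_congr rfl fun c _ =>
          Fintype.sum_prod_type' fun u v =>
            if α ≤ c ∧ c.2.1 ≤ u ∧ (c.1, c.2.2) ≤ v
              then f (c.1, u, c.2.2) * f (v.1, c.2.1, v.2) else 0

lemma stmt7_mixed3 (f : T1 × T2 × T3 → ℝ) (α : T1 × T2 × T3) :
    ∑ a : T1 × T2 × T3, ∑ b : T1 × T2 × T3,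
      (if α ≤ a ∧ α ≤ b ∧ a.1 ≤ b.1 ∧ a.2.1 ≤ b.2.1 ∧ b.2.2 ≤ a.2.2 then f a * f b else 0)
    = ∑ c : T1 × T2 × T3, (if α ≤ c then k3 f c * k1 (k2 f) c else 0) := by
  have step : ∀ c : T1 × T2 × T3, (if α ≤ c then k3 f c * k1 (k2 f) c else 0)
      = ∑ u : T3, ∑ v : T1 × T2,
          (if α ≤ c ∧ c.2.2 ≤ u ∧ (c.1, c.2.1) ≤ v
            then f (c.1, c.2.1, u) * f (v.1, v.2, c.2.2) else 0) := by
    intro c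
    by_cases h : α ≤ c
    · rw [if_pos h, stmt7_k1k2_eq, k3, Finset.sum_mul_sum]
      refine Finset.sum_congr rfl fun u _ => Finset.sum_congr rfl fun v _ => ?_
      by_cases hP : c.2.2 ≤ u <;> by_cases hQ : (c.1, c.2.1) ≤ v <;> simp [hP, hQ, h]
    · rw [if_neg h]
      symm
      exact Finset.sum_eq_zero fun u _ => Finset.sum_eq_zero fun v _ => by simp [h]
  rw [Finset.sum_congr rfl fun c _ => step c]
  have key : (∑ p : (T1 × T2 × T3) × (T1 × T2 × T3),
        (if α ≤ p.1 ∧ α ≤ p.2 ∧ p.1.1 ≤ p.2.1 ∧ p.1.2.1 ≤ p.2.2.1 ∧ p.2.2.2 ≤ p.1.2.2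
          then f p.1 * f p.2 else 0))
      = ∑ q : (T1 × T2 × T3) × (T3 × (T1 × T2)),
        (if α ≤ q.1 ∧ q.1.2.2 ≤ q.2.1 ∧ (q.1.1, q.1.2.1) ≤ q.2.2
          then f (q.1.1, q.1.2.1, q.2.1) * f (q.2.2.1, q.2.2.2, q.1.2.2) else 0) := by
    apply Fintype.sum_equiv
      (⟨fun p => ((p.1.1, p.1.2.1, p.2.2.2), p.1.2.2, (p.2.1, p.2.2.1)),
        fun q => ((q.1.1, q.1.2.1, q.2.1), (q.2.2.1, q.2.2.2, q.1.2.2)),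
        fun _ => rfl, fun _ => rfl⟩ :
        ((T1 × T2 × T3) × (T1 × T2 × T3)) ≃ ((T1 × T2 × T3) × (T3 × (T1 × T2))))
    intro p
    obtain ⟨a, b⟩ := p
    dsimp only [Equiv.coe_fn_mk]
    refine if_congr ?_ rfl rfl
    simp only [Prod.le_def]
    constructor
    · rintro ⟨⟨ha1, ha2, ha3⟩, ⟨hb1, hb2, hb3⟩, hc1, hc2, hc3⟩
      exact ⟨⟨ha1, ha2, hb3⟩, hc3, hc1, hc2⟩
    · rintro ⟨⟨ha1, ha2, hb3⟩, hc3, hc1, hc2⟩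
      exact ⟨⟨ha1, ha2, le_trans hb3 hc3⟩, ⟨le_trans ha1 hc1, le_trans ha2 hc2, hb3⟩,
        hc1, hc2, hc3⟩
  calc ∑ a : T1 × T2 × T3, ∑ b : T1 × T2 × T3,
        (if α ≤ a ∧ α ≤ b ∧ a.1 ≤ b.1 ∧ a.2.1 ≤ b.2.1 ∧ b.2.2 ≤ a.2.2 then f a * f b else 0)
      = ∑ p : (T1 × T2 × T3) × (T1 × T2 × T3),
        (if α ≤ p.1 ∧ α ≤ p.2 ∧ p.1.1 ≤ p.2.1 ∧ p.1.2.1 ≤ p.2.2.1 ∧ p.2.2.2 ≤ p.1.2.2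
          then f p.1 * f p.2 else 0) :=
        (Fintype.sum_prod_type' fun a b =>
          if α ≤ a ∧ α ≤ b ∧ a.1 ≤ b.1 ∧ a.2.1 ≤ b.2.1 ∧ b.2.2 ≤ a.2.2 then f a * f b else 0).symm
    _ = ∑ q : (T1 × T2 × T3) × (T3 × (T1 × T2)),
        (if α ≤ q.1 ∧ q.1.2.2 ≤ q.2.1 ∧ (q.1.1, q.1.2.1) ≤ q.2.2
          then f (q.1.1, q.1.2.1, q.2.1) * f (q.2.2.1, q.2.2.2, q.1.2.2) else 0) := key
    _ = ∑ c : T1 × T2 × T3, ∑ u : T3, ∑ v : T1 × T2,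
        (if α ≤ c ∧ c.2.2 ≤ u ∧ (c.1, c.2.1) ≤ v
          then f (c.1, c.2.1, u) * f (v.1, v.2, c.2.2) else 0) := by
        rw [show (∑ q : (T1 × T2 × T3) × (T3 × (T1 × T2)),
            (if α ≤ q.1 ∧ q.1.2.2 ≤ q.2.1 ∧ (q.1.1, q.1.2.1) ≤ q.2.2
              then f (q.1.1, q.1.2.1, q.2.1) * f (q.2.2.1, q.2.2.2, q.1.2.2) else 0))
          = ∑ c : T1 × T2 × T3, ∑ w : T3 × (T1 × T2),
            (if α ≤ c ∧ c.2.2 ≤ w.1 ∧ (c.1, c.2.1) ≤ w.2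
              then f (c.1, c.2.1, w.1) * f (w.2.1, w.2.2, c.2.2) else 0) from
          Fintype.sum_prod_type' fun (c : T1 × T2 × T3) (w : T3 × (T1 × T2)) =>
            if α ≤ c ∧ c.2.2 ≤ w.1 ∧ (c.1, c.2.1) ≤ w.2
              then f (c.1, c.2.1, w.1) * f (w.2.1, w.2.2, c.2.2) else 0]
        exact Finset.sum_congr rfl fun c _ =>
          Fintype.sum_prod_type' fun u v =>
            if α ≤ c ∧ c.2.2 ≤ u ∧ (c.1, c.2.1) ≤ v
              then f (c.1, c.2.1, u) * f (v.1, v.2, c.2.2) else 0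

lemma stmt7_diag (f : T1 × T2 × T3 → ℝ) (α : T1 × T2 × T3) :
    ∑ a : T1 × T2 × T3, ∑ b : T1 × T2 × T3,
      (if α ≤ a ∧ a ≤ b then f a * f b else 0)
    = ∑ a : T1 × T2 × T3, (if α ≤ a then f a * hI f a else 0) := by
  apply Finset.sum_congr rfl
  intro a _
  by_cases hα : α ≤ a
  · simp only [hα, true_and, if_true]
    rw [hI, Finset.mul_sum]
    apply Finset.sum_congr rfl
    intro b _
    by_cases h : a ≤ b <;> simp [h]
  · simp [hα]

end StmtSevenAux

theorem stmt7 {T1 T2 T3 : Type*} [Fintype T1] [PartialOrder T1] [Fintype T2] [PartialOrder T2]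
    [Fintype T3] [PartialOrder T3]
    (h1 : IsTreeOrder T1) (h2 : IsTreeOrder T2) (h3 : IsTreeOrder T3)
    (δ lam : ℝ) (hδ : 0 < δ) (hδlam : δ ≤ lam / 4)
    (f : T1 × T2 × T3 → ℝ) (hf : ∀ a, 0 ≤ f a)
    (hsupp : ∀ a, f a ≠ 0 → hI f a ≤ δ) (α : T1 × T2 × T3) :
    (if lam ≤ hI f α ∧ hI f α ≤ 2 * lam then hI f α else 0) ≤
      4 / lam * hI (fun a =>
        (k1 f a * k2 (k3 f) a + k2 f a * k1 (k3 f) a + k3 f a * k1 (k2 f) a) *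
          (if hI f a ≤ 2 * lam then 1 else 0)) α := by
  have hlam : 0 < lam := by linarith
  set G : T1 × T2 × T3 → ℝ := fun a =>
    (k1 f a * k2 (k3 f) a + k2 f a * k1 (k3 f) a + k3 f a * k1 (k2 f) a) *
      (if hI f a ≤ 2 * lam then 1 else 0) with hG
  have hGnn : ∀ a, 0 ≤ G a := by
    intro a
    apply mul_nonneg
    · have n1 := stmt7_k1_nonneg f hf a
      have n2 := stmt7_k2_nonneg f hf a
      have n3 := stmt7_k3_nonneg f hf a
      have n23 := stmt7_k2_nonneg (k3 f) (stmt7_k3_nonneg f hf) a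
      have n13 := stmt7_k1_nonneg (k3 f) (stmt7_k3_nonneg f hf) a
      have n12 := stmt7_k1_nonneg (k2 f) (stmt7_k2_nonneg f hf) a
      nlinarith
    · split_ifs <;> norm_num
  by_cases hcond : lam ≤ hI f α ∧ hI f α ≤ 2 * lam
  swap
  · rw [if_neg hcond]
    exact mul_nonneg (by positivity) (stmt7_hI_nonneg G hGnn α)
  rw [if_pos hcond]
  -- Abbreviations
  set S := hI f α with hS
  have hSnn : 0 ≤ S := stmt7_hI_nonneg f hf α
  -- indicator removal
  have hrem : hI G α =
      (∑ c, if α ≤ c then k1 f c * k2 (k3 f) c else 0) +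
      ((∑ c, if α ≤ c then k2 f c * k1 (k3 f) c else 0) +
      (∑ c, if α ≤ c then k3 f c * k1 (k2 f) c else 0)) := by
    unfold hI
    rw [← Finset.sum_add_distrib, ← Finset.sum_add_distrib]
    apply Finset.sum_congr rfl
    intro c _
    by_cases h : α ≤ c
    · have hind : hI f c ≤ 2 * lam := le_trans (stmt7_hI_anti f hf h) hcond.2
      simp only [h, if_true, hG, hind, if_pos, mul_one]
      ring
    · simp [h]
  -- the diagonal sum
  have hCle : (∑ a, if α ≤ a then f a * hI f a else 0) ≤ δ * S := by
    have : (∑ a, if α ≤ a then f a * hI f a else 0)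
        ≤ ∑ a, if α ≤ a then δ * f a else 0 := by
      apply Finset.sum_le_sum
      intro a _
      split_ifs with h
      · rcases eq_or_ne (f a) 0 with hz | hz
        · simp [hz]
        · calc f a * hI f a ≤ f a * δ := mul_le_mul_of_nonneg_left (hsupp a hz) (hf a)
            _ = δ * f a := mul_comm _ _
      · exact le_refl 0
    refine le_trans this (le_of_eq ?_)
    rw [hS]
    unfold hI
    rw [Finset.mul_sum]
    apply Finset.sum_congr rfl
    intro a _
    split_ifs <;> simp
  -- pointwise 8-case bound
  have hpt : ∀ a b : T1 × T2 × T3,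
      (if α ≤ a then f a else 0) * (if α ≤ b then f b else 0) ≤
      (if α ≤ a ∧ α ≤ b ∧ b.1 ≤ a.1 ∧ a.2.1 ≤ b.2.1 ∧ a.2.2 ≤ b.2.2 then f a * f b else 0)
    + ((if α ≤ a ∧ α ≤ b ∧ a.1 ≤ b.1 ∧ b.2.1 ≤ a.2.1 ∧ a.2.2 ≤ b.2.2 then f a * f b else 0)
    + ((if α ≤ a ∧ α ≤ b ∧ a.1 ≤ b.1 ∧ a.2.1 ≤ b.2.1 ∧ b.2.2 ≤ a.2.2 then f a * f b else 0)
    + ((if α ≤ b ∧ α ≤ a ∧ a.1 ≤ b.1 ∧ b.2.1 ≤ a.2.1 ∧ b.2.2 ≤ a.2.2 then f b * f a else 0)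
    + ((if α ≤ b ∧ α ≤ a ∧ b.1 ≤ a.1 ∧ a.2.1 ≤ b.2.1 ∧ b.2.2 ≤ a.2.2 then f b * f a else 0)
    + ((if α ≤ b ∧ α ≤ a ∧ b.1 ≤ a.1 ∧ b.2.1 ≤ a.2.1 ∧ a.2.2 ≤ b.2.2 then f b * f a else 0)
    + ((if α ≤ a ∧ a ≤ b then f a * f b else 0)
    + (if α ≤ b ∧ b ≤ a then f b * f a else 0))))))) := by
    intro a b
    have h0 : ∀ (P : Prop) [Decidable P] (x y : T1 × T2 × T3),
        (0:ℝ) ≤ (if P then f x * f y else 0) := by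
      intro P _ x y
      split_ifs
      · exact mul_nonneg (hf x) (hf y)
      · exact le_refl 0
    have n1 := h0 (α ≤ a ∧ α ≤ b ∧ b.1 ≤ a.1 ∧ a.2.1 ≤ b.2.1 ∧ a.2.2 ≤ b.2.2) a b
    have n2 := h0 (α ≤ a ∧ α ≤ b ∧ a.1 ≤ b.1 ∧ b.2.1 ≤ a.2.1 ∧ a.2.2 ≤ b.2.2) a b
    have n3 := h0 (α ≤ a ∧ α ≤ b ∧ a.1 ≤ b.1 ∧ a.2.1 ≤ b.2.1 ∧ b.2.2 ≤ a.2.2) a b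
    have n4 := h0 (α ≤ b ∧ α ≤ a ∧ a.1 ≤ b.1 ∧ b.2.1 ≤ a.2.1 ∧ b.2.2 ≤ a.2.2) b a
    have n5 := h0 (α ≤ b ∧ α ≤ a ∧ b.1 ≤ a.1 ∧ a.2.1 ≤ b.2.1 ∧ b.2.2 ≤ a.2.2) b a
    have n6 := h0 (α ≤ b ∧ α ≤ a ∧ b.1 ≤ a.1 ∧ b.2.1 ≤ a.2.1 ∧ a.2.2 ≤ b.2.2) b a
    have n7 := h0 (α ≤ a ∧ a ≤ b) a b
    have n8 := h0 (α ≤ b ∧ b ≤ a) b a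
    by_cases ha : α ≤ a
    swap
    · rw [if_neg ha, zero_mul]
      linarith only [n1, n2, n3, n4, n5, n6, n7, n8]
    by_cases hb : α ≤ b
    swap
    · rw [if_neg hb, mul_zero]
      linarith only [n1, n2, n3, n4, n5, n6, n7, n8]
    rw [if_pos ha, if_pos hb]
    have hcm : f a * f b = f b * f a := mul_comm _ _
    obtain ⟨ha1, ha2, ha3⟩ : α.1 ≤ a.1 ∧ α.2.1 ≤ a.2.1 ∧ α.2.2 ≤ a.2.2 := by
      rw [Prod.le_def, Prod.le_def] at ha; exact ⟨ha.1, ha.2.1, ha.2.2⟩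
    obtain ⟨hb1, hb2, hb3⟩ : α.1 ≤ b.1 ∧ α.2.1 ≤ b.2.1 ∧ α.2.2 ≤ b.2.2 := by
      rw [Prod.le_def, Prod.le_def] at hb; exact ⟨hb.1, hb.2.1, hb.2.2⟩
    rcases h1 α.1 a.1 b.1 ha1 hb1 with hx | hx <;>
      rcases h2 α.2.1 a.2.1 b.2.1 ha2 hb2 with hy | hy <;>
      rcases h3 α.2.2 a.2.2 b.2.2 ha3 hb3 with hz | hz
    · -- a1≤b1, a2≤b2, a3≤b3 : a ≤ b, term 7
      have e : (if α ≤ a ∧ a ≤ b then f a * f b else 0) = f a * f b :=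
        if_pos ⟨ha, Prod.le_def.2 ⟨hx, Prod.le_def.2 ⟨hy, hz⟩⟩⟩
      linarith only [e, hcm, n1, n2, n3, n4, n5, n6, n7, n8]
    · -- a1≤b1, a2≤b2, b3≤a3 : term 3
      have e : (if α ≤ a ∧ α ≤ b ∧ a.1 ≤ b.1 ∧ a.2.1 ≤ b.2.1 ∧ b.2.2 ≤ a.2.2
          then f a * f b else 0) = f a * f b := if_pos ⟨ha, hb, hx, hy, hz⟩
      linarith only [e, hcm, n1, n2, n3, n4, n5, n6, n7, n8]
    · -- a1≤b1, b2≤a2, a3≤b3 : term 2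
      have e : (if α ≤ a ∧ α ≤ b ∧ a.1 ≤ b.1 ∧ b.2.1 ≤ a.2.1 ∧ a.2.2 ≤ b.2.2
          then f a * f b else 0) = f a * f b := if_pos ⟨ha, hb, hx, hy, hz⟩
      linarith only [e, hcm, n1, n2, n3, n4, n5, n6, n7, n8]
    · -- a1≤b1, b2≤a2, b3≤a3 : term 4 (swapped)
      have e : (if α ≤ b ∧ α ≤ a ∧ a.1 ≤ b.1 ∧ b.2.1 ≤ a.2.1 ∧ b.2.2 ≤ a.2.2
          then f b * f a else 0) = f b * f a := if_pos ⟨hb, ha, hx, hy, hz⟩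
      linarith only [e, hcm, n1, n2, n3, n4, n5, n6, n7, n8]
    · -- b1≤a1, a2≤b2, a3≤b3 : term 1
      have e : (if α ≤ a ∧ α ≤ b ∧ b.1 ≤ a.1 ∧ a.2.1 ≤ b.2.1 ∧ a.2.2 ≤ b.2.2
          then f a * f b else 0) = f a * f b := if_pos ⟨ha, hb, hx, hy, hz⟩
      linarith only [e, hcm, n1, n2, n3, n4, n5, n6, n7, n8]
    · -- b1≤a1, a2≤b2, b3≤a3 : term 5 (swapped)
      have e : (if α ≤ b ∧ α ≤ a ∧ b.1 ≤ a.1 ∧ a.2.1 ≤ b.2.1 ∧ b.2.2 ≤ a.2.2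
          then f b * f a else 0) = f b * f a := if_pos ⟨hb, ha, hx, hy, hz⟩
      linarith only [e, hcm, n1, n2, n3, n4, n5, n6, n7, n8]
    · -- b1≤a1, b2≤a2, a3≤b3 : term 6 (swapped)
      have e : (if α ≤ b ∧ α ≤ a ∧ b.1 ≤ a.1 ∧ b.2.1 ≤ a.2.1 ∧ a.2.2 ≤ b.2.2
          then f b * f a else 0) = f b * f a := if_pos ⟨hb, ha, hx, hy, hz⟩
      linarith only [e, hcm, n1, n2, n3, n4, n5, n6, n7, n8]
    · -- b1≤a1, b2≤a2, b3≤a3 : b ≤ a, term 8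
      have e : (if α ≤ b ∧ b ≤ a then f b * f a else 0) = f b * f a :=
        if_pos ⟨hb, Prod.le_def.2 ⟨hx, Prod.le_def.2 ⟨hy, hz⟩⟩⟩
      linarith only [e, hcm, n1, n2, n3, n4, n5, n6, n7, n8]
  -- main double-sum bound
  have hsq : S * S = ∑ a : T1 × T2 × T3, ∑ b : T1 × T2 × T3,
      (if α ≤ a then f a else 0) * (if α ≤ b then f b else 0) := by
    rw [hS]
    unfold hI
    rw [Finset.sum_mul_sum]
    refine Finset.sum_congr rfl fun a _ => Finset.sum_congr rfl fun b _ => ?_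
    by_cases h : α ≤ a <;> by_cases h' : α ≤ b <;> simp [h, h']
  have hbig : S * S ≤
      (∑ c, if α ≤ c then k1 f c * k2 (k3 f) c else 0) +
      ((∑ c, if α ≤ c then k2 f c * k1 (k3 f) c else 0) +
      ((∑ c, if α ≤ c then k3 f c * k1 (k2 f) c else 0) +
      ((∑ c, if α ≤ c then k1 f c * k2 (k3 f) c else 0) +
      ((∑ c, if α ≤ c then k2 f c * k1 (k3 f) c else 0) +
      ((∑ c, if α ≤ c then k3 f c * k1 (k2 f) c else 0) +
      ((∑ a, if α ≤ a then f a * hI f a else 0) +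
      (∑ a, if α ≤ a then f a * hI f a else 0))))))) := by
    rw [hsq]
    refine le_trans (Finset.sum_le_sum fun a _ =>
      Finset.sum_le_sum fun b _ => hpt a b) (le_of_eq ?_)
    simp only [Finset.sum_add_distrib]
    congr 1
    · exact stmt7_mixed1 f α
    congr 1
    · exact stmt7_mixed2 f α
    congr 1
    · exact stmt7_mixed3 f α
    congr 1
    · -- swapped term 4  ↦ mixed1
      exact Finset.sum_comm.trans (stmt7_mixed1 f α)
    congr 1
    · exact Finset.sum_comm.trans (stmt7_mixed2 f α)
    congr 1
    · exact Finset.sum_comm.trans (stmt7_mixed3 f α)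
    congr 1
    · exact stmt7_diag f α
    · exact Finset.sum_comm.trans (stmt7_diag f α)
  -- finish
  have h1S : lam * S ≤ S * S := mul_le_mul_of_nonneg_right hcond.1 hSnn
  have hdS : δ * S ≤ lam / 4 * S := mul_le_mul_of_nonneg_right hδlam hSnn
  have hfin : lam * S ≤ 4 * hI G α := by linarith only [hrem, hbig, hCle, hdS, h1S]
  rw [div_mul_eq_mul_div, le_div_iff₀ hlam]
  linarith only [hfin]
end

section
/- Let $T^2$ be a bi-tree, $w(\alpha_1,\alpha_2) = w_1(\alpha_1) w_2(\alpha_2)$ a nonnegative tensor-product weight, and $f : T^2 \to [0,\infty)$ superadditive in each parameter separately. Suppose $\operatorname{supp} f \subseteq \{ \mathbb{I}(wf) \leq \delta \}$. Then $\sum_{T^2} w f \cdot I_1(w_1 f) \cdot I_2(w_2 f) \cdot \mathbb{I}(wf) \leq \delta^2 \sum_{T^2} w f^2$. -/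
open Finset
open scoped Classical

/-- The Hardy operator acting in the first coordinate of a bi-tree. -/
noncomputable def hI1 {T1 T2 : Type*} [Fintype T1] [PartialOrder T1]
    (f : T1 × T2 → ℝ) (a : T1 × T2) : ℝ :=
  ∑ b : T1, if a.1 ≤ b then f (b, a.2) else 0

/-- The Hardy operator acting in the second coordinate of a bi-tree. -/
noncomputable def hI2 {T1 T2 : Type*} [Fintype T2] [PartialOrder T2]
    (f : T1 × T2 → ℝ) (a : T1 × T2) : ℝ :=
  ∑ b : T2, if a.2 ≤ b then f (a.1, b) else 0

/-- Superadditivity in the first parameter separately. -/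
def Superadd1 {T1 T2 : Type*} [Fintype T1] [PartialOrder T1]
    (f : T1 × T2 → ℝ) : Prop :=
  ∀ (β : T1) (a2 : T2), (∑ b, if IsChild b β then f (b, a2) else 0) ≤ f (β, a2)

/-- Superadditivity in the second parameter separately. -/
def Superadd2 {T1 T2 : Type*} [Fintype T2] [PartialOrder T2]
    (f : T1 × T2 → ℝ) : Prop :=
  ∀ (a1 : T1) (β : T2), (∑ b, if IsChild b β then f (a1, b) else 0) ≤ f (a1, β)

/-! ### Auxiliary lemmas -/

section Aux

/-- Every element strictly below `x` lies below a unique child of `x`. -/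
lemma exists_child_aux {T : Type*} [Fintype T] [PartialOrder T] (h1 : IsTreeOrder T)
    {t x : T} (htx : t < x) :
    ∃ c, (IsChild c x ∧ t ≤ c) ∧ ∀ c', IsChild c' x → t ≤ c' → c' = c := by
  obtain ⟨c, hc, hmax'⟩ := Finset.exists_maximal
    (s := Finset.univ.filter (fun d => t ≤ d ∧ d < x)) ⟨t, by simp [htx]⟩
  have hmax : ∀ y, y ∈ Finset.univ.filter (fun d => t ≤ d ∧ d < x) → ¬ c < y :=
    fun y hy hcy => lt_irrefl c (lt_of_lt_of_le hcy (hmax' hy hcy.le))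
  simp only [Finset.mem_filter, Finset.mem_univ, true_and] at hc
  refine ⟨c, ⟨⟨hc.2, fun u hcu hux => ?_⟩, hc.1⟩, fun c' hc' htc' => ?_⟩
  · exact hmax u (by simp [le_trans hc.1 hcu.le, hux]) hcu
  · rcases h1 t c' c htc' hc.1 with h | h
    · rcases h.lt_or_eq with hlt | he
      · exact absurd (hc'.2 c hlt hc.2) (fun h => h)
      · exact he
    · rcases h.lt_or_eq with hlt | he
      · exact absurd hlt (hmax c' (by simp [htc', hc'.1]))
      · exact he.symm

lemma split_le_aux {T : Type*} [Fintype T] [PartialOrder T] (φ : T → ℝ) (x : T) :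
    (∑ t, if t ≤ x then φ t else 0) = φ x + ∑ t, if t < x then φ t else 0 := by
  have h : ∀ t : T, (if t ≤ x then φ t else 0)
      = (if t = x then φ x else 0) + (if t < x then φ t else 0) := by
    intro t
    by_cases h' : t = x
    · subst h'; simp [lt_irrefl]
    · by_cases h'' : t < x
      · simp [h'', h''.le, h']
      · have hn : ¬ t ≤ x := fun hle => h'' (lt_of_le_of_ne hle h')
        simp [hn, h', h'']
  rw [Finset.sum_congr rfl fun t _ => h t, Finset.sum_add_distrib,
    Finset.sum_ite_eq' Finset.univ x (fun _ => φ x)]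
  simp

lemma split_ge_aux {T : Type*} [Fintype T] [PartialOrder T] (φ : T → ℝ) (x : T) :
    (∑ t, if x ≤ t then φ t else 0) = φ x + ∑ t, if x < t then φ t else 0 := by
  have h : ∀ t : T, (if x ≤ t then φ t else 0)
      = (if t = x then φ x else 0) + (if x < t then φ t else 0) := by
    intro t
    by_cases h' : t = x
    · subst h'; simp [lt_irrefl]
    · by_cases h'' : x < t
      · simp [h'', h''.le, h']
      · have hn : ¬ x ≤ t := fun hle => h'' (lt_of_le_of_ne hle (Ne.symm h'))
        simp [hn, h', h'']
  rw [Finset.sum_congr rfl fun t _ => h t, Finset.sum_add_distrib,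
    Finset.sum_ite_eq' Finset.univ x (fun _ => φ x)]
  simp

/-- Summing over the subtree strictly below `x` splits into sums over child subtrees. -/
lemma child_partition_aux {T : Type*} [Fintype T] [PartialOrder T] (h1 : IsTreeOrder T)
    (φ : T → ℝ) (x : T) :
    (∑ t, if t < x then φ t else 0)
      = ∑ c, if IsChild c x then (∑ t, if t ≤ c then φ t else 0) else 0 := by
  have step : ∀ c : T, (if IsChild c x then (∑ t, if t ≤ c then φ t else 0) else 0)
      = ∑ t, if IsChild c x then (if t ≤ c then φ t else 0) else 0 := by
    intro c; split <;> simp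
  have per_t : ∀ t : T, (∑ c, if IsChild c x then (if t ≤ c then φ t else 0) else 0)
      = if t < x then φ t else 0 := by
    intro t
    by_cases htx : t < x
    · obtain ⟨c0, ⟨⟨hc0, htc0⟩, huniq⟩⟩ := exists_child_aux h1 htx
      rw [if_pos htx]
      have h : ∀ c : T, (if IsChild c x then (if t ≤ c then φ t else 0) else 0)
          = if c = c0 then φ t else 0 := by
        intro c
        by_cases h' : c = c0
        · subst h'; rw [if_pos hc0, if_pos htc0, if_pos rfl]
        · rw [if_neg h']
          split
          · next hcx =>
              split
              · next htc => exact absurd (huniq c hcx htc) h'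
              · rfl
          · rfl
      rw [Finset.sum_congr rfl fun c _ => h c,
        Finset.sum_ite_eq' Finset.univ c0 (fun _ => φ t)]
      simp
    · rw [if_neg htx]
      refine Finset.sum_eq_zero fun c _ => ?_
      split
      · next hcx =>
          split
          · next htc => exact absurd (lt_of_le_of_lt htc hcx.1) htx
          · rfl
      · rfl
  calc (∑ t, if t < x then φ t else 0)
      = ∑ t, ∑ c, if IsChild c x then (if t ≤ c then φ t else 0) else 0 :=
        (Finset.sum_congr rfl fun t _ => (per_t t).symm)
    _ = ∑ c, ∑ t, if IsChild c x then (if t ≤ c then φ t else 0) else 0 := Finset.sum_comm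
    _ = ∑ c, if IsChild c x then (∑ t, if t ≤ c then φ t else 0) else 0 :=
        (Finset.sum_congr rfl fun c _ => (step c).symm)

/-- The key one-parameter estimate, in a strengthened form suitable for induction:
if `g` is superadditive and `I(wh) ≤ δ` on the support of `g`, then the subtree sum
`∑_{t ≤ x} w g h` is at most `g x · max 0 (δ − ∑_{d > x} w h)`. -/
lemma key_max {T : Type*} [Fintype T] [PartialOrder T] (h1 : IsTreeOrder T)
    (w g h : T → ℝ) (hw : ∀ t, 0 ≤ w t) (hg : ∀ t, 0 ≤ g t) (hh : ∀ t, 0 ≤ h t)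
    (hsg : Superadd g) (δ : ℝ)
    (hb : ∀ t, g t ≠ 0 → (∑ d, if t ≤ d then w d * h d else 0) ≤ δ) :
    ∀ x : T, (∑ t, if t ≤ x then w t * g t * h t else 0)
      ≤ g x * max 0 (δ - ∑ d, if x < d then w d * h d else 0) := by
  have main : ∀ (n : ℕ) (x : T), (Finset.univ.filter (fun t => t < x)).card = n →
      (∑ t, if t ≤ x then w t * g t * h t else 0)
        ≤ g x * max 0 (δ - ∑ d, if x < d then w d * h d else 0) := by
    intro n
    induction n using Nat.strong_induction_on with
    | _ n ih =>
      intro x hx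
      set V : ℝ := ∑ d, if x < d then w d * h d else 0 with hV
      have hV0 : 0 ≤ V := Finset.sum_nonneg fun d _ => by
        split
        · exact mul_nonneg (hw d) (hh d)
        · exact le_rfl
      have hVc : ∀ c : T, IsChild c x →
          (∑ d, if c < d then w d * h d else 0) = w x * h x + V := by
        intro c hc
        have heq : ∀ d : T, (if c < d then w d * h d else 0)
            = (if x ≤ d then w d * h d else 0) := by
          intro d
          refine if_congr ⟨fun hcd => ?_, fun hxd => lt_of_lt_of_le hc.1 hxd⟩ rfl rfl
          rcases h1 c d x hcd.le hc.1.le with h' | h'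
          · rcases h'.lt_or_eq with h'' | h''
            · exact absurd (hc.2 d hcd h'') (fun q => q)
            · exact h''.ge
          · exact h'
        rw [Finset.sum_congr rfl fun d _ => heq d, split_ge_aux (fun d => w d * h d) x]
      have hchildcard : ∀ c : T, IsChild c x →
          (Finset.univ.filter (fun t => t < c)).card < n := by
        intro c hc
        rw [← hx]
        apply Finset.card_lt_card
        constructor
        · intro t ht
          simp only [Finset.mem_filter, Finset.mem_univ, true_and] at ht ⊢
          exact lt_trans ht hc.1
        · intro hsub
          have := hsub (by simp [hc.1] : c ∈ Finset.univ.filter (fun t => t < x))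
          simp at this
      rw [split_le_aux (fun t => w t * g t * h t) x, child_partition_aux h1 _ x]
      have step1 : (∑ c, if IsChild c x then (∑ t, if t ≤ c then w t * g t * h t else 0) else 0)
          ≤ ∑ c, if IsChild c x then g c * max 0 (δ - (w x * h x + V)) else 0 := by
        refine Finset.sum_le_sum fun c _ => ?_
        split
        · next hc =>
            have := ih _ (hchildcard c hc) c rfl
            rwa [hVc c hc] at this
        · exact le_rfl
      have step2 : (∑ c, if IsChild c x then g c * max 0 (δ - (w x * h x + V)) else 0)
          ≤ g x * max 0 (δ - (w x * h x + V)) := by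
        have he : ∀ c : T, (if IsChild c x then g c * max 0 (δ - (w x * h x + V)) else 0)
            = (if IsChild c x then g c else 0) * max 0 (δ - (w x * h x + V)) := by
          intro c; split <;> simp
        rw [Finset.sum_congr rfl fun c _ => he c, ← Finset.sum_mul]
        exact mul_le_mul_of_nonneg_right (hsg x) (le_max_left 0 _)
      have step3 : w x * g x * h x + g x * max 0 (δ - (w x * h x + V))
          ≤ g x * max 0 (δ - V) := by
        by_cases hgx : g x = 0
        · simp [hgx]
        · have hbx := hb x hgx
          rw [split_ge_aux (fun d => w d * h d) x, ← hV] at hbx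
          have h2 : 0 ≤ δ - (w x * h x + V) := by
            nlinarith [mul_nonneg (hw x) (hh x)]
          rw [max_eq_right h2,
            max_eq_right (by nlinarith [mul_nonneg (hw x) (hh x)] : (0:ℝ) ≤ δ - V)]
          nlinarith [mul_nonneg (mul_nonneg (hw x) (hg x)) (hh x)]
      calc w x * g x * h x +
            (∑ c, if IsChild c x then (∑ t, if t ≤ c then w t * g t * h t else 0) else 0)
          ≤ w x * g x * h x + g x * max 0 (δ - (w x * h x + V)) := by
            have := le_trans step1 step2
            linarith
        _ ≤ g x * max 0 (δ - V) := step3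
  intro x
  exact main _ x rfl

/-- The key one-parameter estimate: `∑_{t ≤ x} w g h ≤ δ · g x`. -/
lemma key_delta {T : Type*} [Fintype T] [PartialOrder T] (h1 : IsTreeOrder T)
    (w g h : T → ℝ) (hw : ∀ t, 0 ≤ w t) (hg : ∀ t, 0 ≤ g t) (hh : ∀ t, 0 ≤ h t)
    (hsg : Superadd g) (δ : ℝ) (hδ : 0 ≤ δ)
    (hb : ∀ t, g t ≠ 0 → (∑ d, if t ≤ d then w d * h d else 0) ≤ δ) (x : T) :
    (∑ t, if t ≤ x then w t * g t * h t else 0) ≤ δ * g x := by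
  refine le_trans (key_max h1 w g h hw hg hh hsg δ hb x) ?_
  rw [mul_comm]
  refine mul_le_mul_of_nonneg_right ?_ (hg x)
  have hV0 : 0 ≤ ∑ d, if x < d then w d * h d else 0 :=
    Finset.sum_nonneg fun d _ => by
      split
      · exact mul_nonneg (hw d) (hh d)
      · exact le_rfl
  exact max_le hδ (by linarith)

lemma hI_nonneg {T : Type*} [Fintype T] [PartialOrder T] {f : T → ℝ}
    (hf : ∀ t, 0 ≤ f t) (a : T) : 0 ≤ hI f a :=
  Finset.sum_nonneg fun b _ => by split; exacts [hf b, le_rfl]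

lemma hI2_nonneg {T1 T2 : Type*} [Fintype T2] [PartialOrder T2] {f : T1 × T2 → ℝ}
    (hf : ∀ t, 0 ≤ f t) (a : T1 × T2) : 0 ≤ hI2 f a :=
  Finset.sum_nonneg fun b _ => by split; exacts [hf _, le_rfl]

lemma hI1_nonneg {T1 T2 : Type*} [Fintype T1] [PartialOrder T1] {f : T1 × T2 → ℝ}
    (hf : ∀ t, 0 ≤ f t) (a : T1 × T2) : 0 ≤ hI1 f a :=
  Finset.sum_nonneg fun b _ => by split; exacts [hf _, le_rfl]

lemma sum_swap13 {α β γ : Type*} [Fintype α] [Fintype β] [Fintype γ] (F : α → β → γ → ℝ) :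
    (∑ a, ∑ b, ∑ c, F a b c) = ∑ c, ∑ b, ∑ a, F a b c := by
  calc (∑ a, ∑ b, ∑ c, F a b c)
      = ∑ b, ∑ a, ∑ c, F a b c := Finset.sum_comm
    _ = ∑ b, ∑ c, ∑ a, F a b c := Finset.sum_congr rfl fun b _ => Finset.sum_comm
    _ = ∑ c, ∑ b, ∑ a, F a b c := Finset.sum_comm

/-- Abel summation (exact Fubini) for the Hardy operator in the first coordinate. -/
lemma abel1 {T1 T2 : Type*} [Fintype T1] [PartialOrder T1] [Fintype T2]
    (g u : T1 × T2 → ℝ) :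
    (∑ a, g a * hI1 u a)
      = ∑ x, u x * (∑ t : T1, if t ≤ x.1 then g (t, x.2) else 0) := by
  have h1 : ∀ a : T1 × T2, g a * hI1 u a
      = ∑ b : T1, if a.1 ≤ b then g a * u (b, a.2) else 0 := by
    intro a
    rw [hI1, Finset.mul_sum]
    exact Finset.sum_congr rfl fun b _ => by split <;> simp
  have h2 : ∀ x : T1 × T2, u x * (∑ t : T1, if t ≤ x.1 then g (t, x.2) else 0)
      = ∑ t : T1, if t ≤ x.1 then u x * g (t, x.2) else 0 := by
    intro x
    rw [Finset.mul_sum]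
    exact Finset.sum_congr rfl fun t _ => by split <;> simp
  rw [Finset.sum_congr rfl fun a _ => h1 a, Finset.sum_congr rfl fun x _ => h2 x,
    Fintype.sum_prod_type, Fintype.sum_prod_type]
  rw [sum_swap13 (fun a1 a2 b => if a1 ≤ b then g (a1, a2) * u (b, a2) else 0)]
  refine Finset.sum_congr rfl fun b _ => Finset.sum_congr rfl fun a2 _ =>
    Finset.sum_congr rfl fun a1 _ => ?_
  split <;> [ring; rfl]

/-- The budget identity: `∑_{d ≥ t} w1 d · I2(w2 f)(d, y) = I(w f)(t, y)`. -/
lemma budget_id {T1 T2 : Type*} [Fintype T1] [PartialOrder T1] [Fintype T2] [PartialOrder T2]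
    (w1 : T1 → ℝ) (w2 : T2 → ℝ) (f : T1 × T2 → ℝ) (t : T1) (y : T2) :
    (∑ d, if t ≤ d then w1 d * hI2 (fun x => w2 x.2 * f x) (d, y) else 0)
      = hI (fun x => w1 x.1 * w2 x.2 * f x) (t, y) := by
  rw [hI, Fintype.sum_prod_type]
  refine Finset.sum_congr rfl fun d _ => ?_
  by_cases htd : t ≤ d
  · rw [if_pos htd, hI2, Finset.mul_sum]
    refine Finset.sum_congr rfl fun e _ => ?_
    by_cases hye : y ≤ e
    · rw [if_pos hye, if_pos (Prod.mk_le_mk.mpr ⟨htd, hye⟩)]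
      ring
    · rw [if_neg hye, if_neg (fun hc => hye (Prod.mk_le_mk.mp hc).2), mul_zero]
  · rw [if_neg htd]
    exact (Finset.sum_eq_zero fun e _ =>
      if_neg (fun hc => htd (Prod.mk_le_mk.mp hc).1)).symm

end Aux

theorem stmt11 {T1 T2 : Type*} [Fintype T1] [PartialOrder T1] [Fintype T2] [PartialOrder T2]
    (h1 : IsTreeOrder T1) (h2 : IsTreeOrder T2)
    (w1 : T1 → ℝ) (w2 : T2 → ℝ) (hw1 : ∀ x, 0 ≤ w1 x) (hw2 : ∀ x, 0 ≤ w2 x)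
    (f : T1 × T2 → ℝ) (hf : ∀ a, 0 ≤ f a)
    (hs1 : Superadd1 f) (hs2 : Superadd2 f) (δ : ℝ)
    (hsupp : ∀ a, f a ≠ 0 → hI (fun x => w1 x.1 * w2 x.2 * f x) a ≤ δ) :
    ∑ a, (w1 a.1 * w2 a.2 * f a) * hI1 (fun x => w1 x.1 * f x) a *
        hI2 (fun x => w2 x.2 * f x) a * hI (fun x => w1 x.1 * w2 x.2 * f x) a
      ≤ δ ^ 2 * ∑ a, w1 a.1 * w2 a.2 * f a ^ 2 := by
  by_cases hf0 : ∀ a, f a = 0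
  · simp [hf0]
  · push_neg at hf0
    obtain ⟨a0, ha0⟩ := hf0
    have hδ : 0 ≤ δ :=
      le_trans (hI_nonneg (fun x => mul_nonneg (mul_nonneg (hw1 _) (hw2 _)) (hf x)) a0)
        (hsupp a0 ha0)
    set u1 : T1 × T2 → ℝ := fun x => w1 x.1 * f x with hu1
    set u2 : T1 × T2 → ℝ := fun x => w2 x.2 * f x with hu2
    -- Step 1: use `I(wf) ≤ δ` on the support of `f`.
    have step1 : (∑ a, (w1 a.1 * w2 a.2 * f a) * hI1 u1 a * hI2 u2 a *
          hI (fun x => w1 x.1 * w2 x.2 * f x) a)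
        ≤ δ * ∑ a, (w1 a.1 * w2 a.2 * f a) * hI1 u1 a * hI2 u2 a := by
      rw [Finset.mul_sum]
      refine Finset.sum_le_sum fun a _ => ?_
      by_cases hfa : f a = 0
      · simp [hfa]
      · have base : 0 ≤ (w1 a.1 * w2 a.2 * f a) * hI1 u1 a * hI2 u2 a :=
          mul_nonneg (mul_nonneg (mul_nonneg (mul_nonneg (hw1 _) (hw2 _)) (hf a))
            (hI1_nonneg (fun x => mul_nonneg (hw1 _) (hf x)) a))
            (hI2_nonneg (fun x => mul_nonneg (hw2 _) (hf x)) a)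
        calc (w1 a.1 * w2 a.2 * f a) * hI1 u1 a * hI2 u2 a *
              hI (fun x => w1 x.1 * w2 x.2 * f x) a
            ≤ (w1 a.1 * w2 a.2 * f a) * hI1 u1 a * hI2 u2 a * δ :=
              mul_le_mul_of_nonneg_left (hsupp a hfa) base
          _ = δ * ((w1 a.1 * w2 a.2 * f a) * hI1 u1 a * hI2 u2 a) := by ring
    -- Step 2: Abel summation in the first variable plus the key one-parameter lemma.
    have step2 : (∑ a, (w1 a.1 * w2 a.2 * f a) * hI1 u1 a * hI2 u2 a)
        ≤ δ * ∑ a, w1 a.1 * w2 a.2 * f a ^ 2 := by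
      have hrw : ∀ a : T1 × T2, (w1 a.1 * w2 a.2 * f a) * hI1 u1 a * hI2 u2 a
          = ((w1 a.1 * w2 a.2 * f a) * hI2 u2 a) * hI1 u1 a := fun a => by ring
      rw [Finset.sum_congr rfl fun a _ => hrw a,
        abel1 (fun a => (w1 a.1 * w2 a.2 * f a) * hI2 u2 a) u1, Finset.mul_sum]
      refine Finset.sum_le_sum fun x _ => ?_
      have hx2 : ∀ t : T1, ((w1 t * w2 x.2 * f (t, x.2)) * hI2 u2 (t, x.2))
          = w2 x.2 * (w1 t * f (t, x.2) * hI2 u2 (t, x.2)) := fun t => by ring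
      have hJ : (∑ t : T1, if t ≤ x.1
            then (w1 t * w2 x.2 * f (t, x.2)) * hI2 u2 (t, x.2) else 0)
          = w2 x.2 * ∑ t : T1, if t ≤ x.1
            then w1 t * f (t, x.2) * hI2 u2 (t, x.2) else 0 := by
        rw [Finset.mul_sum]
        refine Finset.sum_congr rfl fun t _ => ?_
        split
        · exact hx2 t
        · simp
      have hkey : (∑ t : T1, if t ≤ x.1
            then w1 t * f (t, x.2) * hI2 u2 (t, x.2) else 0) ≤ δ * f x := by
        have := key_delta h1 w1 (fun t => f (t, x.2)) (fun t => hI2 u2 (t, x.2))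
          hw1 (fun t => hf _) (fun t => hI2_nonneg (fun y => mul_nonneg (hw2 _) (hf y)) _)
          (fun β => hs1 β x.2) δ hδ
          (fun t hgt => by
            rw [budget_id w1 w2 f t x.2]
            exact hsupp (t, x.2) hgt) x.1
        simpa using this
      have hcn : 0 ≤ w1 x.1 * w2 x.2 * f x :=
        mul_nonneg (mul_nonneg (hw1 _) (hw2 _)) (hf x)
      calc u1 x * (∑ t : T1, if t ≤ x.1
              then (w1 t * w2 x.2 * f (t, x.2)) * hI2 u2 (t, x.2) else 0)
          = (w1 x.1 * w2 x.2 * f x) * (∑ t : T1, if t ≤ x.1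
              then w1 t * f (t, x.2) * hI2 u2 (t, x.2) else 0) := by
            rw [hJ, hu1]; ring
        _ ≤ (w1 x.1 * w2 x.2 * f x) * (δ * f x) :=
            mul_le_mul_of_nonneg_left hkey hcn
        _ = δ * (w1 x.1 * w2 x.2 * f x ^ 2) := by ring
    calc (∑ a, (w1 a.1 * w2 a.2 * f a) * hI1 u1 a * hI2 u2 a *
            hI (fun x => w1 x.1 * w2 x.2 * f x) a)
        ≤ δ * ∑ a, (w1 a.1 * w2 a.2 * f a) * hI1 u1 a * hI2 u2 a := step1
      _ ≤ δ * (δ * ∑ a, w1 a.1 * w2 a.2 * f a ^ 2) :=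
          mul_le_mul_of_nonneg_left step2 hδ
      _ = δ ^ 2 * ∑ a, w1 a.1 * w2 a.2 * f a ^ 2 := by ring
end
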